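/- (Theorem 2, Construction II rate: closed form and growth.) For every integer k ≥ 0, σ(k) = R(ψ,g,k), where R(ψ,g,k) = R₁(ψ,g,k) for k ≤ L₁(ψ,g) and R(ψ,g,k) = R₂(R₁(ψ,g,L₁(ψ,g)), g, k − L₁(ψ,g)) for k > L₁(ψ,g). Moreover the sequence σ(k) is strictly increasing in k and σ(k) → ∞ as k → ∞. -/
import Mathlib


/-!
Statement 7 (Theorem 2, Construction II): closed form `R(ψ,g,k)` for the rate
sequence `σ`, strict monotonicity, and divergence to infinity.
-/

/-- `intLe x` is the smallest nonnegative integer `≥ x` (the paper's `int[x]`). -/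
noncomputable def intLe (x : ℝ) : ℕ := sInf {k : ℕ | x ≤ (k : ℝ)}

/-- The rate sequence `σ`: `σ(0) = ψ`, `σ(k) = 2σ(k−1) − (1/2 − g)` if `σ(k−1) < 1/2`,
and `σ(k) = σ(k−1) + g` if `σ(k−1) ≥ 1/2`. -/
noncomputable def sigmaSeq (g ψ : ℝ) : ℕ → ℝ
  | 0 => ψ
  | k + 1 =>
    if sigmaSeq g ψ k < 1 / 2 then 2 * sigmaSeq g ψ k - (1 / 2 - g)
    else sigmaSeq g ψ k + g

/-- `R₁(ψ,g,k) = (1/2 − g) + 2^k (ψ + g − 1/2)`. -/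
noncomputable def R1 (ψ g : ℝ) (k : ℕ) : ℝ := (1 / 2 - g) + 2 ^ k * (ψ + g - 1 / 2)

/-- `L₁(ψ,g) = int[log(g/(g + ψ − 1/2))/log 2]`. -/
noncomputable def L1 (ψ g : ℝ) : ℕ :=
  intLe (Real.log (g / (g + ψ - 1 / 2)) / Real.log 2)

/-- `R₂(x,g,k) = kg + x`. -/
noncomputable def R2 (x g : ℝ) (k : ℕ) : ℝ := k * g + x

/-- The closed form `R(ψ,g,k)` from Theorem 2. -/
noncomputable def Rclosed (ψ g : ℝ) (k : ℕ) : ℝ :=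
  if k ≤ L1 ψ g then R1 ψ g k
  else R2 (R1 ψ g (L1 ψ g)) g (k - L1 ψ g)

/-- For `1/4 < g ≤ 1/2` and `1/2 − g < ψ ≤ 1/2`: `σ(k) = R(ψ,g,k)` for
every `k`, `σ` is strictly increasing, and `σ(k) → ∞`. -/
theorem sigmaSeq_closed_form (g ψ : ℝ) (hg1 : 1 / 4 < g) (hg2 : g ≤ 1 / 2)
    (hψ1 : 1 / 2 - g < ψ) (hψ2 : ψ ≤ 1 / 2) :
    (∀ k : ℕ, sigmaSeq g ψ k = Rclosed ψ g k) ∧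
    StrictMono (sigmaSeq g ψ) ∧
    Filter.Tendsto (sigmaSeq g ψ) Filter.atTop Filter.atTop := by
  have hg0 : (0:ℝ) < g := by linarith
  set a : ℝ := g + ψ - 1/2 with ha_def
  clear_value a
  have ha : 0 < a := by rw [ha_def]; linarith
  have hag : a ≤ g := by rw [ha_def]; linarith
  have hlog2 : (0:ℝ) < Real.log 2 := Real.log_pos (by norm_num)
  -- key characterization of L1
  have hiff : ∀ k : ℕ, Real.log (g / a) / Real.log 2 ≤ k ↔ g ≤ 2 ^ k * a := by
    intro k
    rw [div_le_iff₀ hlog2]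
    have h2 : (k:ℝ) * Real.log 2 = Real.log ((2:ℝ) ^ k) := by
      rw [Real.log_pow]
    rw [h2, Real.log_le_log_iff (by positivity) (by positivity), div_le_iff₀ ha]
  have hL1eq : L1 ψ g = sInf {k : ℕ | Real.log (g / a) / Real.log 2 ≤ (k : ℝ)} := by
    rw [ha_def]; rfl
  have hL1mem : Real.log (g / a) / Real.log 2 ≤ (L1 ψ g : ℝ) := by
    have hne : {k : ℕ | Real.log (g / a) / Real.log 2 ≤ (k : ℝ)}.Nonempty := by
      obtain ⟨n, hn⟩ := exists_nat_ge (Real.log (g / a) / Real.log 2)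
      exact ⟨n, hn⟩
    have := Nat.sInf_mem hne
    rw [hL1eq]
    exact this
  have hkey : ∀ k : ℕ, g ≤ 2 ^ k * a ↔ L1 ψ g ≤ k := by
    intro k
    constructor
    · intro h
      rw [hL1eq]
      exact Nat.sInf_le ((hiff k).mpr h)
    · intro h
      refine (hiff k).mp (le_trans hL1mem ?_)
      exact_mod_cast h
  -- closed form up to L1
  have hB : ∀ k, k ≤ L1 ψ g → sigmaSeq g ψ k = R1 ψ g k := by
    intro k
    induction k with
    | zero => intro _; simp only [sigmaSeq, R1, pow_zero]; ring
    | succ n ih =>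
      intro hn
      have hn' : n ≤ L1 ψ g := Nat.le_of_succ_le hn
      have hlt : ¬ L1 ψ g ≤ n := Nat.not_le.mpr hn
      have hgn : ¬ g ≤ 2 ^ n * a := fun h => hlt ((hkey n).mp h)
      push_neg at hgn
      have hsn : sigmaSeq g ψ n = R1 ψ g n := ih hn'
      have hlt2 : sigmaSeq g ψ n < 1/2 := by
        rw [hsn]; unfold R1
        have : (2:ℝ) ^ n * (ψ + g - 1/2) = 2 ^ n * a := by rw [ha_def]; ring
        rw [this]; linarith
      show (if sigmaSeq g ψ n < 1/2 then 2 * sigmaSeq g ψ n - (1/2 - g)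
        else sigmaSeq g ψ n + g) = R1 ψ g (n+1)
      rw [if_pos hlt2, hsn]
      unfold R1; rw [pow_succ]; ring
  have hR1L1 : (1:ℝ)/2 ≤ R1 ψ g (L1 ψ g) := by
    have := (hkey (L1 ψ g)).mpr le_rfl
    unfold R1
    have h2 : (2:ℝ) ^ (L1 ψ g) * (ψ + g - 1/2) = 2 ^ (L1 ψ g) * a := by rw [ha_def]; ring
    rw [h2]; linarith
  -- additive regime
  have hC : ∀ j : ℕ, sigmaSeq g ψ (L1 ψ g + j) = R1 ψ g (L1 ψ g) + j * g ∧
      (1:ℝ)/2 ≤ sigmaSeq g ψ (L1 ψ g + j) := by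
    intro j
    induction j with
    | zero =>
      have h := hB (L1 ψ g) le_rfl
      constructor
      · simpa using h
      · simpa [h] using hR1L1
    | succ n ih =>
      obtain ⟨hval, hge⟩ := ih
      have hnotlt : ¬ sigmaSeq g ψ (L1 ψ g + n) < 1/2 := not_lt.mpr hge
      have hstep : sigmaSeq g ψ (L1 ψ g + n + 1) = sigmaSeq g ψ (L1 ψ g + n) + g := by
        show (if sigmaSeq g ψ (L1 ψ g + n) < 1/2 then 2 * sigmaSeq g ψ (L1 ψ g + n) - (1/2 - g)
          else sigmaSeq g ψ (L1 ψ g + n) + g) = _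
        rw [if_neg hnotlt]
      have e : L1 ψ g + (n+1) = L1 ψ g + n + 1 := rfl
      constructor
      · rw [e, hstep, hval]; push_cast; ring
      · rw [e, hstep]; linarith
  have hclosed : ∀ k : ℕ, sigmaSeq g ψ k = Rclosed ψ g k := by
    intro k
    by_cases hk : k ≤ L1 ψ g
    · rw [Rclosed, if_pos hk]; exact hB k hk
    · rw [Rclosed, if_neg hk]
      push_neg at hk
      have hk' : L1 ψ g ≤ k := le_of_lt hk
      have h := (hC (k - L1 ψ g)).1
      rw [Nat.add_sub_cancel' hk'] at h
      rw [h, R2]; ring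
  -- lower bound: sigma k > 1/2 - g
  have hlb : ∀ k : ℕ, 1/2 - g < sigmaSeq g ψ k := by
    intro k
    by_cases hk : k ≤ L1 ψ g
    · rw [hB k hk]
      unfold R1
      have h2 : (2:ℝ) ^ k * (ψ + g - 1/2) = 2 ^ k * a := by rw [ha_def]; ring
      rw [h2]
      have : (0:ℝ) < 2 ^ k * a := by positivity
      linarith
    · push_neg at hk
      have := (hC (k - L1 ψ g)).2
      rw [Nat.add_sub_cancel' (le_of_lt hk)] at this
      linarith
  have hmono : StrictMono (sigmaSeq g ψ) := by
    apply strictMono_nat_of_lt_succ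
    intro k
    show sigmaSeq g ψ k < (if sigmaSeq g ψ k < 1/2 then 2 * sigmaSeq g ψ k - (1/2 - g)
      else sigmaSeq g ψ k + g)
    by_cases h : sigmaSeq g ψ k < 1/2
    · rw [if_pos h]; have := hlb k; linarith
    · rw [if_neg h]; linarith
  refine ⟨hclosed, hmono, ?_⟩
  rw [Filter.tendsto_atTop]
  intro b
  obtain ⟨N, hN⟩ := exists_nat_ge ((b - R1 ψ g (L1 ψ g)) / g)
  filter_upwards [Filter.eventually_ge_atTop (L1 ψ g + N)] with k hk
  have hk' : L1 ψ g ≤ k := le_trans (Nat.le_add_right _ _) hk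
  have h := (hC (k - L1 ψ g)).1
  rw [Nat.add_sub_cancel' hk'] at h
  have hNk : (N:ℝ) ≤ ((k - L1 ψ g : ℕ) : ℝ) := by
    have : N ≤ k - L1 ψ g := by omega
    exact_mod_cast this
  have hbN : b - R1 ψ g (L1 ψ g) ≤ N * g := by
    rw [div_le_iff₀ hg0] at hN; linarith
  rw [h]
  have : (N:ℝ) * g ≤ ((k - L1 ψ g : ℕ) : ℝ) * g := by
    apply mul_le_mul_of_nonneg_right hNk (le_of_lt hg0)
  linarith
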